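/- Fix a unit vector v. The following are equivalent: (a) for every ε>0 there exists a relatively dense set S ⊆ ℝ^l such that liminf_{t→∞} t‖v‖/n(x,x+tv) > d̄₂(v) − ε for all x ∈ S; (b) t‖v‖/n(x,x+tv) converges as t → ∞ to a value independent of x; (c) d̄₂(v) = d̲₂(v). (Assume n satisfies the triangle inequality, |n(y,y+tv) − n(x,x+tv)| ≤ 2C₁‖x−y‖ for a constant C₁, and the linear bounds C₀t ≤ n(x,x+tv) ≤ C₁t for large t.) -/

import Mathlib

open Filter

/-- Directional Speed. Fix a unit vector `v`. The following are
equivalent: (a) for every `ε > 0` there is a relatively dense set `S` such that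
`liminf_{t→∞} t‖v‖/n(x,x+tv) > d̄₂(v) − ε` for all `x ∈ S`; (b) `t‖v‖/n(x,x+tv)`
converges as `t → ∞` to a value independent of `x`; (c) `d̄₂(v) = d̲₂(v)`. -/
theorem stmt_9 {l : ℕ}
    (n : EuclideanSpace ℝ (Fin l) → EuclideanSpace ℝ (Fin l) → ℕ)
    (v : EuclideanSpace ℝ (Fin l)) (hv : ‖v‖ = 1)
    (C₀ C₁ : ℝ) (hC₀ : 0 < C₀) (hC₁ : 0 < C₁)
    (htri : ∀ x y z, n x z ≤ n x y + n y z)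
    (hlip : ∀ (x y : EuclideanSpace ℝ (Fin l)) (t : ℝ),
      |(n y (y + t • v) : ℝ) - (n x (x + t • v) : ℝ)| ≤ 2 * C₁ * ‖x - y‖)
    (hbound : ∀ x, ∀ᶠ t in Filter.atTop,
      C₀ * t ≤ (n x (x + t • v) : ℝ) ∧ (n x (x + t • v) : ℝ) ≤ C₁ * t) :
    let F : EuclideanSpace ℝ (Fin l) → ℝ → ℝ :=
      fun x t => t * ‖v‖ / (n x (x + t • v) : ℝ)
    let d2u : ℝ := ⨆ x, Filter.limsup (F x) Filter.atTop
    let d2l : ℝ := ⨅ x, Filter.liminf (F x) Filter.atTop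
    ((∀ ε > (0 : ℝ), ∃ S : Set (EuclideanSpace ℝ (Fin l)),
        (∃ R > (0 : ℝ), ∀ x, (Metric.ball x R ∩ S).Nonempty) ∧
        ∀ x ∈ S, d2u - ε < Filter.liminf (F x) Filter.atTop) ↔
      (∃ L : ℝ, ∀ x, Filter.Tendsto (F x) Filter.atTop (nhds L))) ∧
    ((∃ L : ℝ, ∀ x, Filter.Tendsto (F x) Filter.atTop (nhds L)) ↔ d2u = d2l) := by
  intro F d2u d2l
  -- eventual bounds on F
  have hFval : ∀ x t, F x t = t / (n x (x + t • v) : ℝ) := by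
    intro x t; simp only [F, hv, mul_one]
  have hbd : ∀ x, ∀ᶠ t in atTop, 1 / C₁ ≤ F x t ∧ F x t ≤ 1 / C₀ := by
    intro x
    filter_upwards [hbound x, eventually_ge_atTop (1 : ℝ)] with t ht h1
    obtain ⟨hl, hr⟩ := ht
    have ht0 : (0 : ℝ) < t := lt_of_lt_of_le one_pos h1
    have hn0 : (0 : ℝ) < (n x (x + t • v) : ℝ) := lt_of_lt_of_le (by positivity) hl
    rw [hFval]
    constructor
    · rw [div_le_div_iff₀ hC₁ hn0]; nlinarith
    · rw [div_le_div_iff₀ hn0 hC₀]; nlinarith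
  have hba : ∀ x, IsBoundedUnder (· ≤ ·) atTop (F x) :=
    fun x => ⟨1 / C₀, eventually_map.mpr (by filter_upwards [hbd x] with t h using h.2)⟩
  have hbb : ∀ x, IsBoundedUnder (· ≥ ·) atTop (F x) :=
    fun x => ⟨1 / C₁, eventually_map.mpr (by filter_upwards [hbd x] with t h using h.1)⟩
  have hcle : ∀ x, IsCoboundedUnder (· ≤ ·) atTop (F x) :=
    fun x => (hbb x).isCoboundedUnder_le
  have hcge : ∀ x, IsCoboundedUnder (· ≥ ·) atTop (F x) :=
    fun x => (hba x).isCoboundedUnder_ge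
  -- the difference F x - F y tends to 0
  have hdiff : ∀ x y, Tendsto (fun t => F x t - F y t) atTop (nhds 0) := by
    intro x y
    set B : ℝ := 2 * C₁ * ‖x - y‖ with hB
    have hB0 : 0 ≤ B := by positivity
    have hlim : Tendsto (fun t : ℝ => B / (C₀ * C₀ * t)) atTop (nhds 0) := by
      apply Tendsto.const_div_atTop
      exact (tendsto_id.const_mul_atTop (by positivity))
    apply squeeze_zero_norm' _ hlim
    filter_upwards [hbound x, hbound y, eventually_ge_atTop (1 : ℝ)] with t hx hy h1
    obtain ⟨hxl, hxr⟩ := hx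
    obtain ⟨hyl, hyr⟩ := hy
    have ht0 : (0 : ℝ) < t := lt_of_lt_of_le one_pos h1
    set a : ℝ := (n x (x + t • v) : ℝ)
    set b : ℝ := (n y (y + t • v) : ℝ)
    have ha0 : 0 < a := lt_of_lt_of_le (by positivity) hxl
    have hb0 : 0 < b := lt_of_lt_of_le (by positivity) hyl
    have hab : |b - a| ≤ B := hlip x y t
    have heq : F x t - F y t = t * (b - a) / (a * b) := by
      rw [hFval, hFval]; change t / a - t / b = _; rw [div_sub_div _ _ ha0.ne' hb0.ne']; ring
    rw [Real.norm_eq_abs, heq, abs_div, abs_mul, abs_of_pos ht0,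
      abs_of_pos (mul_pos ha0 hb0)]
    have h2 : t * |b - a| / (a * b) ≤ (t * B) / ((C₀ * t) * (C₀ * t)) := by
      apply div_le_div₀ (by positivity) (mul_le_mul_of_nonneg_left hab ht0.le)
        (by positivity) (mul_le_mul hxl hyl (by positivity) ha0.le)
    have h3 : (t * B) / ((C₀ * t) * (C₀ * t)) = B / (C₀ * C₀ * t) := by
      field_simp
    rw [h3] at h2; exact h2
  -- limsup and liminf are independent of the base point
  have hevle : ∀ (x y : EuclideanSpace ℝ (Fin l)) (δ : ℝ), 0 < δ →
      ∀ᶠ t in atTop, F x t ≤ F y t + δ := by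
    intro x y δ hδ
    have := Metric.tendsto_nhds.mp (hdiff x y) δ hδ
    filter_upwards [this] with t ht
    rw [Real.dist_eq, sub_zero] at ht
    have := (abs_lt.mp ht).2
    linarith
  have hlimsup_le : ∀ x y,
      limsup (F x) atTop ≤ limsup (F y) atTop := by
    intro x y
    refine le_of_forall_pos_le_add fun δ hδ => ?_
    have h1 : limsup (F x) atTop ≤ limsup (fun t => F y t + δ) atTop := by
      refine limsup_le_limsup (hevle x y δ hδ) (hcle x) ?_
      exact ⟨1 / C₀ + δ, eventually_map.mpr (by filter_upwards [hbd y] with t h using by linarith [h.2])⟩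
    rwa [limsup_add_const atTop (F y) δ (hba y) (hcle y)] at h1
  have hlimsup_eq : ∀ x y, limsup (F x) atTop = limsup (F y) atTop :=
    fun x y => le_antisymm (hlimsup_le x y) (hlimsup_le y x)
  have hliminf_le : ∀ x y,
      liminf (F x) atTop ≤ liminf (F y) atTop := by
    intro x y
    refine le_of_forall_pos_le_add fun δ hδ => ?_
    have h1 : liminf (F x) atTop ≤ liminf (fun t => F y t + δ) atTop := by
      refine liminf_le_liminf (hevle x y δ hδ) (hbb x) ?_
      apply IsBoundedUnder.isCoboundedUnder_ge
      exact ⟨1 / C₀ + δ, eventually_map.mpr (by filter_upwards [hbd y] with t h using by linarith [h.2])⟩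
    rwa [liminf_add_const atTop (F y) δ (hcge y) (hbb y)] at h1
  have hliminf_eq : ∀ x y, liminf (F x) atTop = liminf (F y) atTop :=
    fun x y => le_antisymm (hliminf_le x y) (hliminf_le y x)
  -- identify d2u, d2l with the values at the origin
  have hd2u : d2u = limsup (F 0) atTop := by
    show (⨆ x, limsup (F x) atTop) = _
    rw [iSup_congr fun x => hlimsup_eq x 0, ciSup_const]
  have hd2l : d2l = liminf (F 0) atTop := by
    show (⨅ x, liminf (F x) atTop) = _
    rw [iInf_congr fun x => hliminf_eq x 0, ciInf_const]
  have hlele : d2l ≤ d2u := by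
    rw [hd2u, hd2l]; exact liminf_le_limsup (hba 0) (hbb 0)
  -- second equivalence
  have hiff2 : (∃ L : ℝ, ∀ x, Tendsto (F x) atTop (nhds L)) ↔ d2u = d2l := by
    constructor
    · rintro ⟨L, hL⟩
      rw [hd2u, hd2l, (hL 0).limsup_eq, (hL 0).liminf_eq]
    · intro h
      refine ⟨limsup (F 0) atTop, fun x => ?_⟩
      refine tendsto_of_liminf_eq_limsup ?_ ?_ (hba x) (hbb x)
      · rw [hliminf_eq x 0, ← hd2l, ← h, hd2u]
      · exact hlimsup_eq x 0
  refine ⟨?_, hiff2⟩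
  constructor
  · intro ha
    refine hiff2.mpr (le_antisymm ?_ hlele)
    refine le_of_forall_pos_le_add fun ε hε => ?_
    obtain ⟨S, ⟨R, hR, hdense⟩, hS⟩ := ha ε hε
    obtain ⟨x₀, -, hx₀S⟩ := hdense 0
    have h1 : d2u - ε < liminf (F x₀) atTop := hS x₀ hx₀S
    have h2 : liminf (F x₀) atTop = d2l := by rw [hd2l]; exact hliminf_eq x₀ 0
    linarith
  · intro hb
    have heq : d2u = d2l := hiff2.mp hb
    intro ε hε
    refine ⟨Set.univ, ⟨1, one_pos, fun x => ⟨x, Metric.mem_ball_self one_pos, trivial⟩⟩,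
      fun x _ => ?_⟩
    have h2 : liminf (F x) atTop = d2l := by rw [hd2l]; exact hliminf_eq x 0
    rw [h2, ← heq]; linarith
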